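/- Let L be the Laplacian of an irreducible CTMC with strongly connected underlying graph G = (V, E), j* = (u*, v*) ∈ E, and u' ∈ V. Then the response δ_{u'} of the stationary distribution to perturbing j* is never identically zero as a function of the positive transition rates; i.e., there exists an assignment of positive rates for which δ_{u'} ≠ 0. -/

import Mathlib

/-- The Laplacian of transition rates `ℓ` (`ℓ u v` = rate from `u` to `v`). -/
noncomputable def RateLaplacian {V : Type*} [Fintype V] [DecidableEq V] (ℓ : V → V → ℝ) :
    Matrix V V ℝ :=
  fun v u => if v = u then -∑ w ∈ Finset.univ.filter (· ≠ u), ℓ u w else ℓ u v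

namespace Stmt10Aux

open Matrix Finset

variable {V : Type*} [Fintype V] [DecidableEq V]

lemma lap_mulVec (ℓ : V → V → ℝ) (x : V → ℝ) (v : V) :
    (RateLaplacian ℓ).mulVec x v
      = (∑ u ∈ Finset.univ.erase v, ℓ u v * x u)
        - (∑ z ∈ Finset.univ.erase v, ℓ v z) * x v := by
  have h : (RateLaplacian ℓ).mulVec x v = ∑ u, RateLaplacian ℓ v u * x u := rfl
  rw [h, ← Finset.sum_erase_add _ _ (Finset.mem_univ v), sub_eq_add_neg, ← neg_mul]
  congr 1
  · exact Finset.sum_congr rfl fun u hu => by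
      rw [RateLaplacian, if_neg (Ne.symm (Finset.ne_of_mem_erase hu))]
  · rw [RateLaplacian, if_pos rfl, Finset.filter_ne']

lemma lap_colsum (ℓ : V → V → ℝ) (u : V) : ∑ v, RateLaplacian ℓ v u = 0 := by
  rw [← Finset.sum_erase_add _ _ (Finset.mem_univ u)]
  have h1 : ∑ v ∈ Finset.univ.erase u, RateLaplacian ℓ v u
      = ∑ v ∈ Finset.univ.erase u, ℓ u v :=
    Finset.sum_congr rfl fun v hv => by
      rw [RateLaplacian, if_neg (Finset.ne_of_mem_erase hv)]
  rw [h1, RateLaplacian, if_pos rfl, Finset.filter_ne']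
  ring

lemma sum_mulVec_eq_zero (M : Matrix V V ℝ) (hM : ∀ u, ∑ v, M v u = 0) (x : V → ℝ) :
    ∑ v, M.mulVec x v = 0 := by
  have h : ∀ v, M.mulVec x v = ∑ u, M v u * x u := fun _ => rfl
  simp only [h]
  rw [Finset.sum_comm]
  refine Finset.sum_eq_zero fun u _ => ?_
  rw [← Finset.sum_mul, hM u, zero_mul]

section Kernel

variable {E : Set (V × V)} {ℓ : V → V → ℝ}

lemma ell_nonneg (hE0 : ∀ u v : V, (u, v) ∉ E → ℓ u v = 0)
    (hEpos : ∀ u v : V, (u, v) ∈ E → 0 < ℓ u v) (u v : V) : 0 ≤ ℓ u v := by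
  by_cases h : (u, v) ∈ E
  · exact (hEpos u v h).le
  · rw [hE0 u v h]

variable (hself : ∀ v : V, (v, v) ∉ E)
  (hconn : ∀ u v : V, Relation.ReflTransGen (fun a b => (a, b) ∈ E) u v)
  {ustar vstar : V} (hj : (ustar, vstar) ∈ E)
  (hE0 : ∀ u v : V, (u, v) ∉ E → ℓ u v = 0)
  (hEpos : ∀ u v : V, (u, v) ∈ E → 0 < ℓ u v)

include hself hconn hj hE0 hEpos

lemma exists_out (v : V) : ∃ z, z ≠ v ∧ (v, z) ∈ E := by
  by_cases h : v = ustar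
  · subst h
    refine ⟨vstar, fun hh => hself v ?_, hj⟩
    rwa [hh] at hj
  · rcases (Relation.ReflTransGen.cases_head (hconn v ustar)) with h1 | ⟨z, hz, _⟩
    · exact absurd h1 h
    · exact ⟨z, fun hh => hself v (by rwa [hh] at hz), hz⟩

lemma outRate_pos (v : V) : 0 < ∑ z ∈ Finset.univ.erase v, ℓ v z := by
  obtain ⟨z, hz, hzE⟩ := exists_out hself hconn hj hE0 hEpos v
  refine Finset.sum_pos' (fun i _ => ell_nonneg hE0 hEpos v i) ?_
  exact ⟨z, Finset.mem_erase.2 ⟨hz, Finset.mem_univ z⟩, hEpos _ _ hzE⟩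

lemma abs_in_ker {x : V → ℝ} (hx : (RateLaplacian ℓ).mulVec x = 0) (v : V) :
    (RateLaplacian ℓ).mulVec (fun u => |x u|) v = 0 := by
  have hnn : ∀ v, 0 ≤ (RateLaplacian ℓ).mulVec (fun u => |x u|) v := by
    intro v
    rw [lap_mulVec]
    have hx0 : (∑ u ∈ Finset.univ.erase v, ℓ u v * x u)
        = (∑ z ∈ Finset.univ.erase v, ℓ v z) * x v := by
      have h3 := congrFun hx v
      simp only [Pi.zero_apply] at h3
      rw [lap_mulVec] at h3
      linarith
    have h1 : (∑ z ∈ Finset.univ.erase v, ℓ v z) * |x v|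
        = |(∑ z ∈ Finset.univ.erase v, ℓ v z) * x v| := by
      rw [abs_mul,
        abs_of_nonneg (Finset.sum_nonneg fun i _ => ell_nonneg hE0 hEpos v i)]
    rw [h1, ← hx0]
    have h2 : |∑ u ∈ Finset.univ.erase v, ℓ u v * x u|
        ≤ ∑ u ∈ Finset.univ.erase v, ℓ u v * |x u| := by
      refine (Finset.abs_sum_le_sum_abs _ _).trans ?_
      refine Finset.sum_le_sum fun i _ => ?_
      rw [abs_mul, abs_of_nonneg (ell_nonneg hE0 hEpos i v)]
    linarith
  have htot : ∑ v, (RateLaplacian ℓ).mulVec (fun u => |x u|) v = 0 :=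
    sum_mulVec_eq_zero _ (lap_colsum ℓ) _
  exact (Finset.sum_eq_zero_iff_of_nonneg (fun i _ => hnn i)).1 htot v (Finset.mem_univ v)

lemma ker_pos {x : V → ℝ} (hx : (RateLaplacian ℓ).mulVec x = 0) {v0 : V} (h0 : x v0 ≠ 0) :
    ∀ v, x v ≠ 0 := by
  have habs := abs_in_ker hself hconn hj hE0 hEpos hx
  have key : ∀ v, 0 < |x v| := by
    intro v
    induction hconn v0 v with
    | refl => exact abs_pos.2 h0
    | tail _ step ih =>
      rename_i b c _
      have hbc : b ≠ c := fun h => hself c (by rwa [h] at step)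
      have h2 := habs c
      rw [lap_mulVec] at h2
      have hge : ℓ b c * |x b| ≤ ∑ u ∈ Finset.univ.erase c, ℓ u c * |x u| := by
        exact Finset.single_le_sum (f := fun u => ℓ u c * |x u|)
          (fun i _ => mul_nonneg (ell_nonneg hE0 hEpos i c) (abs_nonneg _))
          (Finset.mem_erase.2 ⟨hbc, Finset.mem_univ b⟩)
      have hpos : 0 < ℓ b c * |x b| := mul_pos (hEpos _ _ step) ih
      have hout := outRate_pos hself hconn hj hE0 hEpos c
      nlinarith [abs_nonneg (x c)]
  exact fun v => abs_ne_zero.1 (key v).ne'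

lemma ker_sign {x : V → ℝ} (hx : (RateLaplacian ℓ).mulVec x = 0) (hne : x ≠ 0) :
    (∀ v, 0 < x v) ∨ (∀ v, x v < 0) := by
  obtain ⟨v0, h0⟩ := Function.ne_iff.1 hne
  simp only [Pi.zero_apply] at h0
  have hall := ker_pos hself hconn hj hE0 hEpos hx h0
  have habs := abs_in_ker hself hconn hj hE0 hEpos hx
  -- same sign across edges
  have hsame : ∀ a b : V, (a, b) ∈ E → 0 < x a * x b := by
    intro a b hab
    have hab' : a ≠ b := fun h => hself b (by rwa [h] at hab)
    set s : ℝ := if 0 < x b then 1 else -1 with hs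
    have hsb : s * x b = |x b| := by
      rcases lt_or_ge 0 (x b) with h | h
      · rw [hs, if_pos h, one_mul, abs_of_pos h]
      · rw [hs, if_neg (not_lt.2 h), neg_one_mul, abs_of_nonpos h]
    have hA : (∑ u ∈ Finset.univ.erase b, ℓ u b * x u)
        = (∑ z ∈ Finset.univ.erase b, ℓ b z) * x b := by
      have h3 := congrFun hx b
      simp only [Pi.zero_apply] at h3
      rw [lap_mulVec] at h3; linarith
    have hB : (∑ u ∈ Finset.univ.erase b, ℓ u b * |x u|)
        = (∑ z ∈ Finset.univ.erase b, ℓ b z) * |x b| := by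
      have h3 := habs b
      rw [lap_mulVec] at h3; linarith
    have hzero : ∑ u ∈ Finset.univ.erase b, ℓ u b * (|x u| - s * x u) = 0 := by
      have hexp : ∑ u ∈ Finset.univ.erase b, ℓ u b * (|x u| - s * x u)
          = (∑ u ∈ Finset.univ.erase b, ℓ u b * |x u|)
            - s * (∑ u ∈ Finset.univ.erase b, ℓ u b * x u) := by
        rw [Finset.mul_sum, ← Finset.sum_sub_distrib]
        exact Finset.sum_congr rfl fun i _ => by ring

      rw [hexp, hA, hB, ← hsb]; ring
    have hterm : ℓ a b * (|x a| - s * x a) = 0 := by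
      have hnn : ∀ i ∈ Finset.univ.erase b, 0 ≤ ℓ i b * (|x i| - s * x i) := by
        intro i _
        refine mul_nonneg (ell_nonneg hE0 hEpos i b) ?_
        have : s * x i ≤ |s * x i| := le_abs_self _
        have habs1 : |s * x i| = |x i| := by
          rw [abs_mul]
          have : |s| = 1 := by rcases lt_or_ge 0 (x b) with h | h
                               · rw [hs, if_pos h, abs_one]
                               · rw [hs, if_neg (not_lt.2 h), abs_neg, abs_one]
          rw [this, one_mul]
        linarith [habs1 ▸ this]
      exact (Finset.sum_eq_zero_iff_of_nonneg hnn).1 hzero a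
        (Finset.mem_erase.2 ⟨hab', Finset.mem_univ a⟩)
    have hxa : |x a| = s * x a := by
      have hl := hEpos a b hab
      rcases mul_eq_zero.1 hterm with h | h
      · exact absurd h hl.ne'
      · linarith
    have h1 : 0 < s * x a := hxa ▸ abs_pos.2 (hall a)
    have h2 : 0 < s * x b := hsb ▸ abs_pos.2 (hall b)
    have hs2 : s * s = 1 := by rcases lt_or_ge 0 (x b) with h | h
                               · rw [hs, if_pos h]; ring
                               · rw [hs, if_neg (not_lt.2 h)]; ring
    nlinarith
  have hprop : ∀ v, 0 < x v0 * x v := by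
    intro v
    induction hconn v0 v with
    | refl => exact mul_self_pos.2 h0
    | tail _ step ih =>
      rename_i b c _
      have h2 := hsame b c step
      nlinarith [mul_self_pos.2 (hall b)]
  rcases lt_or_ge 0 (x v0) with h | h
  · left; intro v; nlinarith [hprop v]
  · right; intro v
    have hv0 : x v0 < 0 := lt_of_le_of_ne h (hall v0)
    nlinarith [hprop v]

lemma ker_inj {x : V → ℝ} (hx : (RateLaplacian ℓ).mulVec x = 0) (hsum : ∑ v, x v = 0) :
    x = 0 := by
  by_contra hne
  have hn : Nonempty V := ⟨ustar⟩
  rcases ker_sign hself hconn hj hE0 hEpos hx hne with h | h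
  · have : 0 < ∑ v, x v := Finset.sum_pos (fun i _ => h i) Finset.univ_nonempty
    linarith
  · have : ∑ v, x v < 0 := Finset.sum_neg (fun i _ => h i) Finset.univ_nonempty
    linarith

end Kernel

section Construct

variable (E : Set (V × V)) (ustar vstar : V)

def Rset : Set V :=
  {x | Relation.ReflTransGen (fun a b => (a, b) ∈ E ∧ b ≠ ustar) vstar x}

def Hstep : V → V → Prop := fun x y =>
  ((x, y) ∈ E ∧ x ∉ Rset E ustar vstar) ∨ ((y, x) ∈ E ∧ y ∈ Rset E ustar vstar)

variable {E ustar vstar}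
variable (hself : ∀ v : V, (v, v) ∉ E)
  (hconn : ∀ u v : V, Relation.ReflTransGen (fun a b => (a, b) ∈ E) u v)
  (hj : (ustar, vstar) ∈ E)

omit [Fintype V] [DecidableEq V]

lemma vstar_mem_R : vstar ∈ Rset E ustar vstar := Relation.ReflTransGen.refl

lemma Rset_closed {x y : V} (hx : x ∈ Rset E ustar vstar) (he : (x, y) ∈ E)
    (hy : y ≠ ustar) : y ∈ Rset E ustar vstar :=
  Relation.ReflTransGen.tail hx ⟨he, hy⟩

include hself hj in
lemma ustar_not_R : ustar ∉ Rset E ustar vstar := by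
  intro h
  cases h with
  | refl => exact hself ustar hj
  | tail h1 step => exact step.2 rfl

include hself hj in
lemma reachH_from_ustar_aux {x : V}
    (h : Relation.ReflTransGen (fun a b => (a, b) ∈ E) x ustar) :
    x ∈ Rset E ustar vstar → Relation.ReflTransGen (Hstep E ustar vstar) ustar x := by
  induction h using Relation.ReflTransGen.head_induction_on with
  | refl => exact fun hx => absurd hx (ustar_not_R hself hj)
  | head step h ih =>
    rename_i a z
    intro hx
    by_cases hz : z = ustar
    · subst hz
      exact Relation.ReflTransGen.single (Or.inr ⟨step, hx⟩)
    · exact (ih (Relation.ReflTransGen.tail hx ⟨step, hz⟩)).tail (Or.inr ⟨step, hx⟩)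

include hself hconn hj in
lemma reachH_from_ustar_of_R {b : V} (hb : b ∈ Rset E ustar vstar) :
    Relation.ReflTransGen (Hstep E ustar vstar) ustar b :=
  reachH_from_ustar_aux hself hj (hconn b ustar) hb

include hself hconn hj in
lemma reachH_from_ustar (a : V) :
    Relation.ReflTransGen (Hstep E ustar vstar) ustar a := by
  have h := hconn ustar a
  induction h with
  | refl => exact Relation.ReflTransGen.refl
  | tail h1 step ih =>
    rename_i z a
    by_cases haR : a ∈ Rset E ustar vstar
    · exact reachH_from_ustar_of_R hself hconn hj haR
    · by_cases hzR : z ∈ Rset E ustar vstar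
      · by_cases hau : a = ustar
        · subst hau; exact Relation.ReflTransGen.refl
        · exact absurd (Rset_closed hzR step hau) haR
      · exact ih.tail (Or.inl ⟨step, hzR⟩)

lemma reachH_to_vstar_of_R {b : V} (hb : b ∈ Rset E ustar vstar) :
    Relation.ReflTransGen (Hstep E ustar vstar) b vstar := by
  induction hb with
  | refl => exact Relation.ReflTransGen.refl
  | tail h1 step ih =>
    exact Relation.ReflTransGen.head (Or.inr ⟨step.1, h1⟩) ih

include hconn in
lemma reachH_to_vstar (a : V) :
    Relation.ReflTransGen (Hstep E ustar vstar) a vstar := by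
  have h := hconn a vstar
  induction h using Relation.ReflTransGen.head_induction_on with
  | refl => exact Relation.ReflTransGen.refl
  | head step h ih =>
    rename_i a z
    by_cases haR : a ∈ Rset E ustar vstar
    · exact reachH_to_vstar_of_R haR
    · exact Relation.ReflTransGen.head (Or.inl ⟨step, haR⟩) ih

omit hself hconn hj

end Construct

section Flows

/-- elementary unit flow on the single pair `(a, b)`. -/
def ind (a b : V) : V → V → ℝ := fun u v => if u = a ∧ v = b then 1 else 0

lemma ind_nonneg (a b u v : V) : 0 ≤ ind a b u v := by
  unfold ind; split <;> norm_num

lemma ind_ne_zero {a b u v : V} (h : ind a b u v ≠ 0) : u = a ∧ v = b := by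
  by_contra hc
  exact h (by simp [ind, hc])

lemma div_ind (a b v : V) :
    (∑ u, ind a b u v) - (∑ z, ind a b v z)
      = (if v = b then (1 : ℝ) else 0) - (if v = a then 1 else 0) := by
  congr 1
  · by_cases hv : v = b <;> simp [ind, hv]
  · by_cases hv : v = a <;> simp [ind, hv]

variable {E : Set (V × V)} {ustar vstar : V}

lemma exists_preflow {x y : V}
    (h : Relation.ReflTransGen (Hstep E ustar vstar) x y) :
    ∃ f : V → V → ℝ,
      (∀ u v, f u v ≠ 0 → (u, v) ∈ E) ∧
      (∀ u v, u ∉ Rset E ustar vstar → 0 ≤ f u v) ∧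
      (∀ u v, u ∈ Rset E ustar vstar → f u v ≤ 0) ∧
      (∀ v, (∑ u, f u v) - (∑ z, f v z)
        = (if v = y then (1 : ℝ) else 0) - (if v = x then 1 else 0)) := by
  induction h with
  | refl => exact ⟨0, by simp, by simp, by simp, by simp⟩
  | tail h1 step ih =>
    rename_i z y
    obtain ⟨f, hsupp, hpos, hneg, hdiv⟩ := ih
    rcases step with ⟨hzy, hz⟩ | ⟨hyz, hy⟩
    · -- forward edge (z, y), z ∉ R
      refine ⟨f + ind z y, ?_, ?_, ?_, ?_⟩
      · intro u v huv
        by_cases hc : u = z ∧ v = y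
        · rcases hc with ⟨h1, h2⟩; subst h1; subst h2; exact hzy
        · apply hsupp u v
          simpa [Pi.add_apply, ind, hc] using huv
      · intro u v hu
        exact add_nonneg (hpos u v hu) (ind_nonneg _ _ _ _)
      · intro u v hu
        have hne : ¬(u = z ∧ v = y) := fun hc => hz (hc.1 ▸ hu)
        have : ind z y u v = 0 := by simp [ind, hne]
        simpa [Pi.add_apply, this] using hneg u v hu
      · intro v
        have h2 := div_ind z y v
        have h3 := hdiv v
        simp only [Pi.add_apply]
        rw [Finset.sum_add_distrib, Finset.sum_add_distrib]
        have : ((∑ u, f u v) + (∑ u, ind z y u v))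
            - ((∑ w, f v w) + (∑ w, ind z y v w))
            = ((∑ u, f u v) - (∑ w, f v w))
              + ((∑ u, ind z y u v) - (∑ w, ind z y v w)) := by ring
        rw [this, h2, h3]
        by_cases h4 : v = y <;> by_cases h5 : v = z <;> by_cases h6 : v = x <;>
          simp [h4, h5, h6] <;> ring
    · -- reversed edge: E-edge (y, z) with y ∈ R
      refine ⟨f - ind y z, ?_, ?_, ?_, ?_⟩
      · intro u v huv
        by_cases hc : u = y ∧ v = z
        · rcases hc with ⟨h1, h2⟩; subst h1; subst h2; exact hyz
        · apply hsupp u v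
          simpa [Pi.sub_apply, ind, hc] using huv
      · intro u v hu
        have hne : ¬(u = y ∧ v = z) := fun hc => hu (hc.1 ▸ hy)
        have : ind y z u v = 0 := by simp [ind, hne]
        simpa [Pi.sub_apply, this] using hpos u v hu
      · intro u v hu
        have := ind_nonneg y z u v
        have h2 := hneg u v hu
        simp only [Pi.sub_apply]
        linarith
      · intro v
        have h2 := div_ind y z v
        have h3 := hdiv v
        simp only [Pi.sub_apply]
        rw [Finset.sum_sub_distrib, Finset.sum_sub_distrib]
        have : ((∑ u, f u v) - (∑ u, ind y z u v))
            - ((∑ w, f v w) - (∑ w, ind y z v w))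
            = ((∑ u, f u v) - (∑ w, f v w))
              - ((∑ u, ind y z u v) - (∑ w, ind y z v w)) := by ring
        rw [this, h2, h3]
        by_cases h4 : v = y <;> by_cases h5 : v = z <;> by_cases h6 : v = x <;>
          simp [h4, h5, h6] <;> ring

end Flows

section GoodRates

variable {E : Set (V × V)} {ustar vstar : V}

set_option maxHeartbeats 1000000 in
lemma exists_good_rates
    (hself : ∀ v : V, (v, v) ∉ E)
    (hconn : ∀ u v : V, Relation.ReflTransGen (fun a b => (a, b) ∈ E) u v)
    (hj : (ustar, vstar) ∈ E) (u' : V) :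
    ∃ (ℓ : V → V → ℝ) (w : V → ℝ),
      (∀ u v : V, ((u, v) ∈ E → 0 < ℓ u v) ∧ ((u, v) ∉ E → ℓ u v = 0)) ∧
      (∀ v, (RateLaplacian ℓ).mulVec w v
          = (if v = vstar then (1 : ℝ) else 0) - (if v = ustar then 1 else 0)) ∧
      (∑ v, w v = 0) ∧ w u' ≠ 0 := by
  classical
  set R := Rset E ustar vstar with hRdef
  have hvstarR : vstar ∈ R := vstar_mem_R
  have hustarR : ustar ∉ R := ustar_not_R hself hj
  -- a unit `ustar → vstar` flow through each edge
  have hflows : ∀ e : V × V, ∃ f : V → V → ℝ,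
      e ∈ E →
      ((∀ u v, f u v ≠ 0 → (u, v) ∈ E) ∧
       (∀ u v, u ∉ R → 0 ≤ f u v) ∧ (∀ u v, u ∈ R → f u v ≤ 0) ∧
       (∀ v, (∑ u, f u v) - (∑ z, f v z)
          = (if v = vstar then (1 : ℝ) else 0) - (if v = ustar then 1 else 0)) ∧
       (e.1 ∉ R → 1 ≤ f e.1 e.2) ∧ (e.1 ∈ R → f e.1 e.2 ≤ -1)) := by
    rintro ⟨a, b⟩
    by_cases he : (a, b) ∈ E
    · by_cases haR : a ∈ R
      · -- reversed H-edge (b → a)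
        obtain ⟨f1, h1supp, h1pos, h1neg, h1div⟩ :=
          exists_preflow (reachH_from_ustar hself hconn hj (vstar := vstar) b)
        obtain ⟨f2, h2supp, h2pos, h2neg, h2div⟩ :=
          exists_preflow (reachH_to_vstar hconn (ustar := ustar) a)
        refine ⟨f1 + f2 - ind a b, fun _ => ⟨?_, ?_, ?_, ?_, ?_, ?_⟩⟩
        · intro u v huv
          by_cases hc : u = a ∧ v = b
          · rcases hc with ⟨h1, h2⟩; subst h1; subst h2; exact he
          · have hi : ind a b u v = 0 := by simp [ind, hc]
            simp only [Pi.sub_apply, Pi.add_apply, hi, sub_zero] at huv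
            by_cases h1 : f1 u v = 0
            · refine h2supp u v fun h2 => huv ?_
              rw [h1, h2, add_zero]
            · exact h1supp u v h1
        · intro u v hu
          have hi : ind a b u v = 0 := by
            have : ¬(u = a ∧ v = b) := fun hc => hu (hc.1 ▸ haR)
            simp [ind, this]
          have := h1pos u v hu
          have := h2pos u v hu
          simp only [Pi.sub_apply, Pi.add_apply, hi]
          linarith
        · intro u v hu
          have := ind_nonneg a b u v
          have := h1neg u v hu
          have := h2neg u v hu
          simp only [Pi.sub_apply, Pi.add_apply]
          linarith
        · intro v
          simp only [Pi.sub_apply, Pi.add_apply]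
          simp only [Finset.sum_sub_distrib, Finset.sum_add_distrib]
          have e1 := h1div v
          have e2 := h2div v
          have e3 := div_ind a b v
          linarith
        · intro hc; exact absurd haR hc
        · intro _
          have := h1neg a b haR
          have := h2neg a b haR
          have hii : ind a b a b = 1 := by simp [ind]
          simp only [Pi.sub_apply, Pi.add_apply, hii]
          linarith
      · -- forward H-edge (a → b)
        obtain ⟨f1, h1supp, h1pos, h1neg, h1div⟩ :=
          exists_preflow (reachH_from_ustar hself hconn hj (vstar := vstar) a)
        obtain ⟨f2, h2supp, h2pos, h2neg, h2div⟩ :=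
          exists_preflow (reachH_to_vstar hconn (ustar := ustar) b)
        refine ⟨f1 + f2 + ind a b, fun _ => ⟨?_, ?_, ?_, ?_, ?_, ?_⟩⟩
        · intro u v huv
          by_cases hc : u = a ∧ v = b
          · rcases hc with ⟨h1, h2⟩; subst h1; subst h2; exact he
          · have hi : ind a b u v = 0 := by simp [ind, hc]
            simp only [Pi.add_apply, hi, add_zero] at huv
            by_cases h1 : f1 u v = 0
            · refine h2supp u v fun h2 => huv ?_
              rw [h1, h2, add_zero]
            · exact h1supp u v h1
        · intro u v hu
          have := ind_nonneg a b u v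
          have := h1pos u v hu
          have := h2pos u v hu
          simp only [Pi.add_apply]
          linarith
        · intro u v hu
          have hi : ind a b u v = 0 := by
            have : ¬(u = a ∧ v = b) := fun hc => haR (hc.1 ▸ hu)
            simp [ind, this]
          have := h1neg u v hu
          have := h2neg u v hu
          simp only [Pi.add_apply, hi]
          linarith
        · intro v
          simp only [Pi.add_apply]
          simp only [Finset.sum_add_distrib]
          have e1 := h1div v
          have e2 := h2div v
          have e3 := div_ind a b v
          linarith
        · intro _
          have := h1pos a b haR
          have := h2pos a b haR
          have hii : ind a b a b = 1 := by simp [ind]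
          simp only [Pi.add_apply, hii]
          linarith
        · intro hc; exact absurd hc haR
    · exact ⟨0, fun h => absurd h he⟩
  choose F hF using hflows
  set EF : Finset (V × V) := Set.Finite.toFinset (Set.toFinite E) with hEF
  have hmem : ∀ e : V × V, e ∈ EF ↔ e ∈ E := fun e => Set.Finite.mem_toFinset _
  set φ : V → V → ℝ := fun u v => ∑ e ∈ EF, F e u v with hφ
  have hsuppφ : ∀ u v, (u, v) ∉ E → φ u v = 0 := by
    intro u v h
    refine Finset.sum_eq_zero fun e heEF => ?_
    by_contra hne
    exact h (((hF e ((hmem e).1 heEF)).1) u v hne)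
  have hposφ : ∀ u v, (u, v) ∈ E → u ∉ R → 1 ≤ φ u v := by
    intro u v he hu
    have huv : (u, v) ∈ EF := (hmem _).2 he
    have h1 : F (u, v) u v ≤ φ u v := by
      refine Finset.single_le_sum (f := fun e => F e u v) (fun e heEF => ?_) huv
      exact (hF e ((hmem e).1 heEF)).2.1 u v hu
    have h2 : 1 ≤ F (u, v) u v := (hF (u, v) he).2.2.2.2.1 hu
    linarith
  have hnegφ : ∀ u v, (u, v) ∈ E → u ∈ R → φ u v ≤ -1 := by
    intro u v he hu
    have huv : (u, v) ∈ EF := (hmem _).2 he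
    have h1 : φ u v = F (u, v) u v + ∑ e ∈ EF.erase (u, v), F e u v := by
      rw [hφ]; exact (Finset.add_sum_erase _ _ huv).symm
    have h2 : ∑ e ∈ EF.erase (u, v), F e u v ≤ 0 := by
      refine Finset.sum_nonpos fun e heEF => ?_
      exact (hF e ((hmem e).1 (Finset.mem_of_mem_erase heEF))).2.2.1 u v hu
    have h3 : F (u, v) u v ≤ -1 := (hF (u, v) he).2.2.2.2.2 hu
    linarith
  have hdiagφ : ∀ v, φ v v = 0 := fun v => hsuppφ v v (hself v)
  have hdivφ : ∀ v, (∑ u, φ u v) - (∑ z, φ v z)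
      = (EF.card : ℝ) * ((if v = vstar then (1 : ℝ) else 0)
          - (if v = ustar then 1 else 0)) := by
    intro v
    have h1 : ∑ u, φ u v = ∑ e ∈ EF, ∑ u, F e u v := Finset.sum_comm
    have h2 : ∑ z, φ v z = ∑ e ∈ EF, ∑ z, F e v z := Finset.sum_comm
    rw [h1, h2, ← Finset.sum_sub_distrib]
    rw [Finset.sum_congr rfl (fun e heEF => (hF e ((hmem e).1 heEF)).2.2.2.1 v)]
    rw [Finset.sum_const, nsmul_eq_mul]
  have hmEF : (ustar, vstar) ∈ EF := (hmem _).2 hj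
  have hmpos : 0 < (EF.card : ℝ) := by
    have : 0 < EF.card := Finset.card_pos.2 ⟨_, hmEF⟩
    exact_mod_cast this
  -- the vector w
  set AF : Finset V := Finset.univ.filter (fun v => v ∉ R) with hAF
  set RF : Finset V := Finset.univ.filter (fun v => v ∈ R) with hRF
  have hAcard : 0 < (AF.card : ℝ) := by
    have : 0 < AF.card :=
      Finset.card_pos.2 ⟨ustar, Finset.mem_filter.2 ⟨Finset.mem_univ _, hustarR⟩⟩
    exact_mod_cast this
  have hRcard : 0 < (RF.card : ℝ) := by
    have : 0 < RF.card :=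
      Finset.card_pos.2 ⟨vstar, Finset.mem_filter.2 ⟨Finset.mem_univ _, hvstarR⟩⟩
    exact_mod_cast this
  set w : V → ℝ := fun v => if v ∈ R then -(1 / (RF.card : ℝ)) else 1 / (AF.card : ℝ)
    with hw
  have hwneg : ∀ u, u ∈ R → w u < 0 := by
    intro u hu
    simp only [hw, if_pos hu]
    have : 0 < 1 / (RF.card : ℝ) := by positivity
    linarith
  have hwpos : ∀ u, u ∉ R → 0 < w u := by
    intro u hu
    simp only [hw, if_neg hu]
    positivity
  have hw0 : ∀ u, w u ≠ 0 := by
    intro u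
    by_cases hu : u ∈ R
    · exact (hwneg u hu).ne
    · exact (hwpos u hu).ne'
  have hsumw : ∑ v, w v = 0 := by
    calc ∑ v, w v
        = ∑ v ∈ RF, w v + ∑ v ∈ AF, w v :=
          (Finset.sum_filter_add_sum_filter_not Finset.univ (fun v => v ∈ R) w).symm
      _ = ∑ _v ∈ RF, -(1 / (RF.card : ℝ)) + ∑ _v ∈ AF, (1 / (AF.card : ℝ)) := by
          congr 1
          · exact Finset.sum_congr rfl fun v hv => by
              simp only [hw, if_pos (Finset.mem_filter.1 hv).2]
          · exact Finset.sum_congr rfl fun v hv => by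
              simp only [hw, if_neg (Finset.mem_filter.1 hv).2]
      _ = 0 := by
          rw [Finset.sum_const, Finset.sum_const, nsmul_eq_mul, nsmul_eq_mul,
            mul_neg, mul_one_div, mul_one_div, div_self hRcard.ne',
            div_self hAcard.ne']
          ring
  set ℓ : V → V → ℝ :=
    fun u v => if (u, v) ∈ E then φ u v / ((EF.card : ℝ) * w u) else 0 with hℓ
  have hrates : ∀ u v : V, ((u, v) ∈ E → 0 < ℓ u v) ∧ ((u, v) ∉ E → ℓ u v = 0) := by
    intro u v
    constructor
    · intro he
      simp only [hℓ, if_pos he]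
      by_cases hu : u ∈ R
      · have h1 := hnegφ u v he hu
        have h2 := hwneg u hu
        exact div_pos_of_neg_of_neg (by linarith) (mul_neg_of_pos_of_neg hmpos h2)
      · have h1 := hposφ u v he hu
        have h2 := hwpos u hu
        exact div_pos (by linarith) (mul_pos hmpos h2)
    · intro he; simp only [hℓ, if_neg he]
  have hlw : ∀ u v, ℓ u v * w u = φ u v / (EF.card : ℝ) := by
    intro u v
    by_cases he : (u, v) ∈ E
    · simp only [hℓ, if_pos he]
      rw [div_mul_eq_mul_div, mul_comm ((EF.card : ℝ)) (w u),
        mul_comm (φ u v) (w u), mul_div_mul_left _ _ (hw0 u)]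
    · simp only [hℓ, if_neg he, zero_mul, hsuppφ u v he, zero_div]
  refine ⟨ℓ, w, hrates, ?_, hsumw, hw0 u'⟩
  intro v
  rw [lap_mulVec]
  have h1 : ∑ u ∈ Finset.univ.erase v, ℓ u v * w u
      = ∑ u ∈ Finset.univ.erase v, φ u v / (EF.card : ℝ) :=
    Finset.sum_congr rfl fun u _ => hlw u v
  have h2 : (∑ z ∈ Finset.univ.erase v, ℓ v z) * w v
      = ∑ z ∈ Finset.univ.erase v, φ v z / (EF.card : ℝ) := by
    rw [Finset.sum_mul]
    exact Finset.sum_congr rfl fun z _ => hlw v z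
  rw [h1, h2]
  have hdv : φ v v / (EF.card : ℝ) = 0 := by rw [hdiagφ v, zero_div]
  have h3 : ∑ u ∈ Finset.univ.erase v, φ u v / (EF.card : ℝ)
      = ∑ u, φ u v / (EF.card : ℝ) := by
    rw [← Finset.sum_erase_add _ _ (Finset.mem_univ v), hdv, add_zero]
  have h4 : ∑ z ∈ Finset.univ.erase v, φ v z / (EF.card : ℝ)
      = ∑ z, φ v z / (EF.card : ℝ) := by
    rw [← Finset.sum_erase_add _ _ (Finset.mem_univ v), hdv, add_zero]
  rw [h3, h4, ← Finset.sum_div, ← Finset.sum_div, div_sub_div_same, hdivφ v,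
    mul_div_cancel_left₀ _ hmpos.ne']

end GoodRates

section Analysis

variable {E : Set (V × V)} {ustar vstar : V}

noncomputable def toCLM (M : Matrix V V ℝ) : (V → ℝ) →L[ℝ] (V → ℝ) :=
  LinearMap.toContinuousLinearMap M.mulVecLin

lemma toCLM_apply (M : Matrix V V ℝ) (x : V → ℝ) : toCLM M x = M.mulVec x := rfl

set_option maxHeartbeats 1000000 in
theorem main_analysis
    (hself : ∀ v : V, (v, v) ∉ E)
    (hconn : ∀ u v : V, Relation.ReflTransGen (fun a b => (a, b) ∈ E) u v)
    (hj : (ustar, vstar) ∈ E) (u' : V)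
    (ℓ : V → V → ℝ)
    (hE0 : ∀ u v : V, (u, v) ∉ E → ℓ u v = 0)
    (hEpos : ∀ u v : V, (u, v) ∈ E → 0 < ℓ u v)
    (w : V → ℝ)
    (hw : ∀ v, (RateLaplacian ℓ).mulVec w v
        = (if v = vstar then (1 : ℝ) else 0) - (if v = ustar then 1 else 0))
    (hsumw : ∑ v, w v = 0) (hwu' : w u' ≠ 0) :
    ∃ μ : ℝ → V → ℝ, ∃ δ : V → ℝ,
      (∀ᶠ ε in nhds (0 : ℝ),
        (RateLaplacian ℓ + ε • (Matrix.single vstar ustar (1 : ℝ) -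
            Matrix.single ustar ustar (1 : ℝ))).mulVec (μ ε) = 0 ∧
        ∑ v : V, μ ε v = 1) ∧
      HasDerivAt μ δ 0 ∧ δ u' ≠ 0 := by
  classical
  have hn : Nonempty V := ⟨ustar⟩
  have hcard : (0 : ℝ) < (Fintype.card V : ℝ) := by exact_mod_cast Fintype.card_pos
  set Δm : Matrix V V ℝ := Matrix.single vstar ustar (1 : ℝ) -
      Matrix.single ustar ustar (1 : ℝ) with hΔm
  set Om : Matrix V V ℝ := Matrix.of (fun _ _ => (1 : ℝ)) with hOm
  set Bm : ℝ → Matrix V V ℝ := fun ε => RateLaplacian ℓ + ε • Δm + Om with hBm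
  have hOmul : ∀ (x : V → ℝ) (v : V), Om.mulVec x v = ∑ u, x u := by
    intro x v
    show ∑ u, Om v u * x u = _
    simp [hOm]
  have hstd : ∀ (i j : V) (x : V → ℝ) (v : V),
      (Matrix.single i j (1 : ℝ)).mulVec x v
        = if i = v then x j else 0 := by
    intro i j x v
    show ∑ u, Matrix.single i j (1 : ℝ) v u * x u = _
    simp only [Matrix.single, Matrix.of_apply]
    rcases eq_or_ne i v with rfl | h
    · simp
    · simp [fun hh : v = i => h hh.symm, h]
  have hΔmul : ∀ (x : V → ℝ) (v : V),
      Δm.mulVec x v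
        = (if vstar = v then x ustar else 0) - (if ustar = v then x ustar else 0) := by
    intro x v
    rw [hΔm, Matrix.sub_mulVec]
    simp only [Pi.sub_apply, hstd]
  have hΔcol : ∀ u, ∑ v, Δm v u = 0 := by
    intro u
    simp only [hΔm, Matrix.sub_apply, Finset.sum_sub_distrib]
    have h1 : ∀ i j : V, (∑ v, Matrix.single i j (1 : ℝ) v u)
        = if j = u then 1 else 0 := by
      intro i j
      simp only [Matrix.single, Matrix.of_apply]
      rcases eq_or_ne j u with rfl | h
      · simp
      · simp [h]
    rw [h1, h1]
    simp
  have hsum0 : ∀ (ε : ℝ) (x : V → ℝ),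
      ∑ v, (RateLaplacian ℓ + ε • Δm).mulVec x v = 0 := by
    intro ε x
    apply sum_mulVec_eq_zero
    intro u
    simp only [Matrix.add_apply, Matrix.smul_apply, smul_eq_mul,
      Finset.sum_add_distrib]
    rw [lap_colsum, ← Finset.mul_sum, hΔcol]
    ring
  have hBmul : ∀ (ε : ℝ) (x : V → ℝ) (v : V),
      (Bm ε).mulVec x v = (RateLaplacian ℓ + ε • Δm).mulVec x v + ∑ u, x u := by
    intro ε x v
    simp only [hBm]
    rw [Matrix.add_mulVec]
    simp only [Pi.add_apply]
    rw [hOmul]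
  have hBsolve : ∀ (ε : ℝ) (x : V → ℝ),
      (Bm ε).mulVec x = (fun _ => (1 : ℝ)) →
      ((RateLaplacian ℓ + ε • Δm).mulVec x = 0 ∧ ∑ v, x v = 1) := by
    intro ε x hx
    have hsum : ∑ v, x v = 1 := by
      have h1 : ∑ v, (Bm ε).mulVec x v = (Fintype.card V : ℝ) := by
        rw [hx]
        simp [Finset.card_univ]
      have h2 : ∑ v, (Bm ε).mulVec x v
          = (Fintype.card V : ℝ) * (∑ u, x u) := by
        rw [Finset.sum_congr rfl (fun v _ => hBmul ε x v),
          Finset.sum_add_distrib, hsum0, Finset.sum_const, zero_add,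
          nsmul_eq_mul, Finset.card_univ]
      refine mul_left_cancel₀ hcard.ne' ?_
      rw [mul_one]
      exact h2.symm.trans h1
    refine ⟨?_, hsum⟩
    funext v
    have h3 := congrFun hx v
    rw [hBmul ε x v, hsum] at h3
    have : (RateLaplacian ℓ + ε • Δm).mulVec x v = 0 := by linarith
    simpa using this
  have hL0 : RateLaplacian ℓ + (0 : ℝ) • Δm = RateLaplacian ℓ := by
    rw [zero_smul, add_zero]
  have hdet0 : (Bm 0).det ≠ 0 := by
    intro hdet
    obtain ⟨x, hx0, hx⟩ := (Matrix.exists_mulVec_eq_zero_iff).2 hdet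
    have h1 : ∀ v, (RateLaplacian ℓ).mulVec x v + ∑ u, x u = 0 := by
      intro v
      have h2 := congrFun hx v
      rw [hBmul 0 x v, hL0] at h2
      simpa using h2
    have hsx : ∑ v, x v = 0 := by
      have h2 : ∑ v, ((RateLaplacian ℓ).mulVec x v + ∑ u, x u) = 0 := by
        simp only [h1]
        simp
      rw [Finset.sum_add_distrib] at h2
      have h3 : ∑ v, (RateLaplacian ℓ).mulVec x v = 0 := by
        have := hsum0 0 x
        rwa [hL0] at this
      rw [h3, zero_add, Finset.sum_const, nsmul_eq_mul, Finset.card_univ] at h2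
      rcases mul_eq_zero.1 h2 with h4 | h4
      · exact absurd h4 hcard.ne'
      · exact h4
    have hLx : (RateLaplacian ℓ).mulVec x = 0 := by
      funext v
      have h4 := h1 v
      rw [hsx] at h4
      simpa using h4
    exact hx0 (ker_inj hself hconn hj hE0 hEpos hLx hsx)
  have hdetU : IsUnit (Bm 0).det := IsUnit.mk0 _ hdet0
  have hMi1 : Bm 0 * (Bm 0)⁻¹ = 1 := Matrix.mul_nonsing_inv _ hdetU
  have hMi2 : (Bm 0)⁻¹ * Bm 0 = 1 := Matrix.nonsing_inv_mul _ hdetU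
  set C : (V → ℝ) →L[ℝ] (V → ℝ) := toCLM (Bm 0) with hC
  set Ci : (V → ℝ) →L[ℝ] (V → ℝ) := toCLM (Bm 0)⁻¹ with hCi
  set D : (V → ℝ) →L[ℝ] (V → ℝ) := toCLM Δm with hD
  have hCapp : ∀ y : V → ℝ, C y = (Bm 0).mulVec y := fun y => by
    rw [hC, toCLM_apply]
  have hCiapp : ∀ y : V → ℝ, Ci y = (Bm 0)⁻¹.mulVec y := fun y => by
    rw [hCi, toCLM_apply]
  have hCCi : C * Ci = 1 := by
    ext x
    rw [ContinuousLinearMap.mul_apply, hC, hCi, toCLM_apply, toCLM_apply,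
      Matrix.mulVec_mulVec, hMi1, Matrix.one_mulVec, ContinuousLinearMap.one_apply]
  have hCiC : Ci * C = 1 := by
    ext x
    rw [ContinuousLinearMap.mul_apply, hC, hCi, toCLM_apply, toCLM_apply,
      Matrix.mulVec_mulVec, hMi2, Matrix.one_mulVec, ContinuousLinearMap.one_apply]
  set uC : ((V → ℝ) →L[ℝ] (V → ℝ))ˣ := ⟨C, Ci, hCCi, hCiC⟩ with huC
  set T : ℝ → (V → ℝ) →L[ℝ] (V → ℝ) := fun ε => C + ε • D with hT
  have hTB : ∀ (ε : ℝ) (x : V → ℝ), T ε x = (Bm ε).mulVec x := by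
    intro ε x
    simp only [hT]
    rw [ContinuousLinearMap.add_apply, ContinuousLinearMap.smul_apply, hC, hD,
      toCLM_apply, toCLM_apply]
    have hBe : Bm ε = Bm 0 + ε • Δm := by
      simp only [hBm]
      rw [zero_smul, add_zero]
      abel
    rw [hBe]
    simp only [Matrix.add_mulVec, Matrix.smul_mulVec]
  have hT0 : T 0 = C := by
    simp only [hT]
    rw [zero_smul, add_zero]
  have hTderiv : HasDerivAt T D 0 := by
    have h1 : HasDerivAt (fun ε : ℝ => ε • D) ((1 : ℝ) • D) 0 :=
      (hasDerivAt_id (0 : ℝ)).smul_const D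
    have h2 := h1.const_add C
    rw [one_smul] at h2
    exact h2
  have hIderiv : HasDerivAt (fun ε => Ring.inverse (T ε))
      (-(↑uC⁻¹ * D * ↑uC⁻¹)) 0 := by
    have h1 := hasFDerivAt_ringInverse (𝕜 := ℝ) uC
    have h2 : (↑uC : (V → ℝ) →L[ℝ] (V → ℝ)) = T 0 := by rw [hT0]
    rw [h2] at h1
    have h3 := h1.comp_hasDerivAt 0 hTderiv
    simp [ContinuousLinearMap.mulLeftRight_apply] at h3
    exact h3
  set μ : ℝ → V → ℝ := fun ε => Ring.inverse (T ε) (fun _ => (1 : ℝ)) with hμ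
  set μ0 : V → ℝ := Ci (fun _ => (1 : ℝ)) with hμ0
  have hBμ0 : (Bm 0).mulVec μ0 = fun _ => (1 : ℝ) := by
    have h1 : (C * Ci) (fun _ => (1 : ℝ)) = (fun _ => (1 : ℝ)) := by
      rw [hCCi, ContinuousLinearMap.one_apply]
    calc (Bm 0).mulVec μ0 = C μ0 := (hCapp μ0).symm
      _ = C (Ci (fun _ => (1 : ℝ))) := by rw [hμ0]
      _ = (fun _ => (1 : ℝ)) := by rw [← ContinuousLinearMap.mul_apply, h1]
  obtain ⟨hLμ0, hsumμ0⟩ := hBsolve 0 μ0 hBμ0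
  rw [hL0] at hLμ0
  have hμ0ne : μ0 ustar ≠ 0 := by
    have hne : μ0 ≠ 0 := by
      intro h
      rw [h] at hsumμ0
      simp at hsumμ0
    obtain ⟨v0, hv0⟩ := Function.ne_iff.1 hne
    simp only [Pi.zero_apply] at hv0
    exact ker_pos hself hconn hj hE0 hEpos hLμ0 hv0 ustar
  have hBw : (Bm 0).mulVec w
      = fun v => (if v = vstar then (1 : ℝ) else 0) - (if v = ustar then 1 else 0) := by
    funext v
    rw [hBmul 0 w v, hsumw, add_zero, hL0]
    exact hw v
  have hδeq : (-(↑uC⁻¹ * D * ↑uC⁻¹) : (V → ℝ) →L[ℝ] (V → ℝ)) (fun _ => (1 : ℝ))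
      = -(μ0 ustar • w) := by
    have h1 : (↑uC⁻¹ : (V → ℝ) →L[ℝ] (V → ℝ)) = Ci := by rw [huC]; rfl
    rw [ContinuousLinearMap.neg_apply, h1]
    have h2 : (Ci * D * Ci) (fun _ => (1 : ℝ)) = Ci (D μ0) := by
      rw [ContinuousLinearMap.mul_apply, ContinuousLinearMap.mul_apply, hμ0]
    rw [h2]
    have h3 : D μ0 = (Bm 0).mulVec (μ0 ustar • w) := by
      rw [hD, toCLM_apply]
      funext v
      rw [Matrix.mulVec_smul, hΔmul μ0 v]
      have h4 : ((μ0 ustar • (Bm 0).mulVec w) v)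
          = μ0 ustar * ((if v = vstar then (1 : ℝ) else 0)
              - (if v = ustar then 1 else 0)) := by
        rw [Pi.smul_apply, hBw, smul_eq_mul]
      rw [h4]
      by_cases h5 : vstar = v <;> by_cases h6 : ustar = v <;>
        simp [h5, h6, eq_comm] <;> ring
    rw [h3]
    have h4 : Ci ((Bm 0).mulVec (μ0 ustar • w)) = μ0 ustar • w := by
      have h5 : (Ci * C) (μ0 ustar • w) = μ0 ustar • w := by
        rw [hCiC, ContinuousLinearMap.one_apply]
      calc Ci ((Bm 0).mulVec (μ0 ustar • w)) = Ci (C (μ0 ustar • w)) := by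
            rw [hCapp (μ0 ustar • w)]
        _ = μ0 ustar • w := by rw [← ContinuousLinearMap.mul_apply, h5]
    rw [h4]
  have hμderiv : HasDerivAt μ (-(μ0 ustar • w)) 0 := by
    have heval :=
      ((ContinuousLinearMap.apply ℝ (V → ℝ) (fun _ => (1 : ℝ))).hasFDerivAt).comp_hasDerivAt
        0 hIderiv
    rw [← hδeq, hμ]
    simp [ContinuousLinearMap.apply_apply] at heval
    exact heval
  have hdetcont : Continuous fun ε : ℝ => (Bm ε).det := by
    apply Continuous.matrix_det
    simp only [hBm]
    have h1 : Continuous fun ε : ℝ => ε • Δm := continuous_id.smul continuous_const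
    exact (continuous_const.add h1).add continuous_const
  have hev : ∀ᶠ ε in nhds (0 : ℝ), (Bm ε).det ≠ 0 :=
    hdetcont.continuousAt.eventually_ne hdet0
  refine ⟨μ, -(μ0 ustar • w), ?_, hμderiv, ?_⟩
  · refine hev.mono fun ε hε => ?_
    have hU : IsUnit (Bm ε).det := IsUnit.mk0 _ hε
    have hMi1e : Bm ε * (Bm ε)⁻¹ = 1 := Matrix.mul_nonsing_inv _ hU
    have hMi2e : (Bm ε)⁻¹ * Bm ε = 1 := Matrix.nonsing_inv_mul _ hU
    have hCCie : toCLM (Bm ε) * toCLM (Bm ε)⁻¹ = 1 := by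
      ext x
      rw [ContinuousLinearMap.mul_apply, toCLM_apply, toCLM_apply,
        Matrix.mulVec_mulVec, hMi1e, Matrix.one_mulVec, ContinuousLinearMap.one_apply]
    have hCiCe : toCLM (Bm ε)⁻¹ * toCLM (Bm ε) = 1 := by
      ext x
      rw [ContinuousLinearMap.mul_apply, toCLM_apply, toCLM_apply,
        Matrix.mulVec_mulVec, hMi2e, Matrix.one_mulVec, ContinuousLinearMap.one_apply]
    set uE : ((V → ℝ) →L[ℝ] (V → ℝ))ˣ := ⟨toCLM (Bm ε), toCLM (Bm ε)⁻¹, hCCie, hCiCe⟩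
      with huE
    have hTε : T ε = ↑uE := by
      ext x
      rw [hTB, huE]
      rfl
    have hRinv : Ring.inverse (T ε) = toCLM (Bm ε)⁻¹ := by
      rw [hTε, Ring.inverse_unit]
      rw [huE]; rfl
    have hBμ : (Bm ε).mulVec (μ ε) = fun _ => (1 : ℝ) := by
      have h1 : μ ε = toCLM (Bm ε)⁻¹ (fun _ => (1 : ℝ)) := by
        rw [hμ]
        show Ring.inverse (T ε) (fun _ => (1 : ℝ)) = _
        rw [hRinv]
      calc (Bm ε).mulVec (μ ε)
          = toCLM (Bm ε) (μ ε) := by rw [toCLM_apply]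
        _ = toCLM (Bm ε) (toCLM (Bm ε)⁻¹ (fun _ => (1 : ℝ))) := by rw [h1]
        _ = (toCLM (Bm ε) * toCLM (Bm ε)⁻¹) (fun _ => (1 : ℝ)) :=
            (ContinuousLinearMap.mul_apply _ _ _).symm
        _ = fun _ => (1 : ℝ) := by rw [hCCie, ContinuousLinearMap.one_apply]
    obtain ⟨hker, hsum⟩ := hBsolve ε (μ ε) hBμ
    exact ⟨hker, hsum⟩
  · show -(μ0 ustar • w) u' ≠ 0
    simp only [Pi.neg_apply, Pi.smul_apply, smul_eq_mul, neg_ne_zero]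
    exact mul_ne_zero hμ0ne hwu'

end Analysis
end Stmt10Aux

/-- For a fixed strongly connected graph `E` (no self-loops), edge
`j* = (u*, v*) ∈ E` and vertex `u'`, the response `δ_{u'}` is not identically
zero as a function of the rates: there is an assignment of positive transition
rates (positive exactly on `E`) for which the response of the stationary
distribution at `u'` to perturbing `j*` is nonzero. -/
theorem stmt10 {V : Type*} [Fintype V] [DecidableEq V] (E : Set (V × V))
    (hself : ∀ v : V, (v, v) ∉ E)
    (hconn : ∀ u v : V, Relation.ReflTransGen (fun a b => (a, b) ∈ E) u v)
    (ustar vstar : V) (hj : (ustar, vstar) ∈ E) (u' : V) :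
    ∃ ℓ : V → V → ℝ,
      (∀ u v : V, ((u, v) ∈ E → 0 < ℓ u v) ∧ ((u, v) ∉ E → ℓ u v = 0)) ∧
      ∃ μ : ℝ → V → ℝ, ∃ δ : V → ℝ,
        (∀ᶠ ε in nhds (0 : ℝ),
          (RateLaplacian ℓ + ε • (Matrix.single vstar ustar (1 : ℝ) -
              Matrix.single ustar ustar (1 : ℝ))).mulVec (μ ε) = 0 ∧
          ∑ v : V, μ ε v = 1) ∧
        HasDerivAt μ δ 0 ∧ δ u' ≠ 0 := by
  obtain ⟨ℓ, w, hrates, hw, hsumw, hwu'⟩ :=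
    Stmt10Aux.exists_good_rates hself hconn hj u'
  exact ⟨ℓ, hrates,
    Stmt10Aux.main_analysis hself hconn hj u' ℓ
      (fun u v => (hrates u v).2) (fun u v => (hrates u v).1) w hw hsumw hwu'⟩
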